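/- For the 2D incompressible porous medium equation: let 0 < s < 1, k ∈ R, and define ψ(x,y) = ((1−s)(x − x₀ − k(y−y₀))/(1+k²))^{1/(1−s)} on the region where x − x₀ − k(y−y₀) > 0, p = kψ, θ = ψ^s, u = ∇⊥ψ. Then u·∇θ = 0, div u = 0, and u = θ e₂ + ∇p hold on that region. -/

import Mathlib

/-- Partial derivative in the first variable. -/
noncomputable def pd1 (f : ℝ → ℝ → ℝ) (x y : ℝ) : ℝ := deriv (fun s => f s y) x

/-- Partial derivative in the second variable. -/
noncomputable def pd2 (f : ℝ → ℝ → ℝ) (x y : ℝ) : ℝ := deriv (fun s => f x s) y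

/-- The explicit profile
`ψ(x,y) = ((1−s)(x − x₀ − k(y−y₀))/(1+k²))^{1/(1−s)}`, with `p = kψ`, `θ = ψˢ` and
`u = ∇⊥ψ = (−∂_yψ, ∂_xψ)`, solves the steady 2D incompressible porous medium system
`u·∇θ = 0`, `div u = 0`, `u = θ e₂ + ∇p` on the region `{x − x₀ − k(y−y₀) > 0}`. -/
theorem ipm_explicit_solution
    (s k x₀ y₀ : ℝ) (hs0 : 0 < s) (hs1 : s < 1)
    (ψ p θ u₁ u₂ : ℝ → ℝ → ℝ)
    (hψ : ∀ x y, ψ x y =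
      ((1-s)*(x - x₀ - k*(y - y₀))/(1+k^2)) ^ ((1:ℝ)/(1-s)))
    (hp : ∀ x y, p x y = k * ψ x y)
    (hθ : ∀ x y, θ x y = (ψ x y) ^ s)
    (hu₁ : ∀ x y, u₁ x y = -(pd2 ψ x y))
    (hu₂ : ∀ x y, u₂ x y = pd1 ψ x y) :
    ∀ x y : ℝ, 0 < x - x₀ - k*(y - y₀) →
      u₁ x y * pd1 θ x y + u₂ x y * pd2 θ x y = 0 ∧
      pd1 u₁ x y + pd2 u₂ x y = 0 ∧
      u₁ x y = pd1 p x y ∧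
      u₂ x y = θ x y + pd2 p x y := by
  have hs' : (0:ℝ) < 1 - s := by linarith
  have hk : (0:ℝ) < 1 + k^2 := by positivity
  set a : ℝ := (1:ℝ)/(1-s) with ha
  set C : ℝ → ℝ → ℝ := fun X Y => (1-s)*(X - x₀ - k*(Y - y₀))/(1+k^2) with hC
  have hinv : (1 - s) * a = 1 := by rw [ha]; field_simp
  have hCpos : ∀ X Y : ℝ, 0 < X - x₀ - k*(Y - y₀) → 0 < C X Y := by
    intro X Y h
    exact div_pos (mul_pos hs' h) hk
  -- derivative of C in each variable
  have hC1 : ∀ X Y : ℝ, HasDerivAt (fun t : ℝ => C t Y) ((1-s)/(1+k^2)) X := by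
    intro X Y
    have heq : (fun t : ℝ => C t Y) =
        fun t : ℝ => ((1-s)/(1+k^2)) * t + ((1-s)*(- x₀ - k*(Y - y₀))/(1+k^2)) := by
      funext t
      show (1-s)*(t - x₀ - k*(Y - y₀))/(1+k^2) = _
      ring
    rw [heq]
    simpa using ((hasDerivAt_id X).const_mul ((1-s)/(1+k^2))).add_const ((1-s)*(- x₀ - k*(Y - y₀))/(1+k^2))
  have hC2 : ∀ X Y : ℝ, HasDerivAt (fun t : ℝ => C X t) (-(k*(1-s))/(1+k^2)) Y := by
    intro X Y
    have heq : (fun t : ℝ => C X t) =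
        fun t : ℝ => (-(k*(1-s))/(1+k^2)) * t + ((1-s)*(X - x₀ + k*y₀)/(1+k^2)) := by
      funext t
      show (1-s)*(X - x₀ - k*(t - y₀))/(1+k^2) = _
      ring
    rw [heq]
    simpa using ((hasDerivAt_id Y).const_mul (-(k*(1-s))/(1+k^2))).add_const ((1-s)*(X - x₀ + k*y₀)/(1+k^2))
  -- derivative of ψ in the first variable
  have key1 : ∀ X Y : ℝ, 0 < X - x₀ - k*(Y - y₀) →
      HasDerivAt (fun t => ψ t Y) ((C X Y) ^ (a-1) / (1+k^2)) X := by
    intro X Y h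
    have hc := hCpos X Y h
    have h2 := (hC1 X Y).rpow_const (p := a) (Or.inl hc.ne')
    have hfun : (fun t => ψ t Y) = fun t => (C t Y) ^ a := by
      funext t; rw [hψ]
    rw [hfun]
    convert h2 using 1
    rw [show (1-s)/(1+k^2) * a * C X Y ^ (a-1)
        = ((1-s)*a) * C X Y ^ (a-1) / (1+k^2) from by ring, hinv]
    ring
  -- derivative of ψ in the second variable
  have key2 : ∀ X Y : ℝ, 0 < X - x₀ - k*(Y - y₀) →
      HasDerivAt (fun t => ψ X t) (-(k * (C X Y) ^ (a-1)) / (1+k^2)) Y := by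
    intro X Y h
    have hc := hCpos X Y h
    have h2 := (hC2 X Y).rpow_const (p := a) (Or.inl hc.ne')
    have hfun : (fun t => ψ X t) = fun t => (C X t) ^ a := by
      funext t; rw [hψ]
    rw [hfun]
    convert h2 using 1
    rw [show -(k*(1-s))/(1+k^2) * a * C X Y ^ (a-1)
        = -(k * (((1-s)*a) * C X Y ^ (a-1))) / (1+k^2) from by ring, hinv]
    ring
  have pd1ψ : ∀ X Y : ℝ, 0 < X - x₀ - k*(Y - y₀) →
      pd1 ψ X Y = (C X Y) ^ (a-1) / (1+k^2) := fun X Y h => (key1 X Y h).deriv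
  have pd2ψ : ∀ X Y : ℝ, 0 < X - x₀ - k*(Y - y₀) →
      pd2 ψ X Y = -(k * (C X Y) ^ (a-1)) / (1+k^2) := fun X Y h => (key2 X Y h).deriv
  intro x y hxy
  have hc := hCpos x y hxy
  have hψval : ψ x y = (C x y) ^ a := hψ x y
  have hψpos : 0 < ψ x y := by rw [hψval]; exact Real.rpow_pos_of_pos hc a
  -- derivatives of θ
  have hdθ1 : pd1 θ x y = s * (ψ x y) ^ (s-1) * ((C x y) ^ (a-1) / (1+k^2)) := by
    have h2 := (key1 x y hxy).rpow_const (p := s) (Or.inl hψpos.ne')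
    have hfun : (fun t => θ t y) = fun t => (ψ t y) ^ s := by funext t; rw [hθ]
    rw [pd1, hfun, h2.deriv]; ring
  have hdθ2 : pd2 θ x y = s * (ψ x y) ^ (s-1) * (-(k * (C x y) ^ (a-1)) / (1+k^2)) := by
    have h2 := (key2 x y hxy).rpow_const (p := s) (Or.inl hψpos.ne')
    have hfun : (fun t => θ x t) = fun t => (ψ x t) ^ s := by funext t; rw [hθ]
    rw [pd2, hfun, h2.deriv]; ring
  -- derivatives of p
  have hdp1 : pd1 p x y = k * ((C x y) ^ (a-1) / (1+k^2)) := by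
    have h2 := (key1 x y hxy).const_mul k
    have hfun : (fun t => p t y) = fun t => k * ψ t y := by funext t; rw [hp]
    rw [pd1, hfun, h2.deriv]
  have hdp2 : pd2 p x y = k * (-(k * (C x y) ^ (a-1)) / (1+k^2)) := by
    have h2 := (key2 x y hxy).const_mul k
    have hfun : (fun t => p x t) = fun t => k * ψ x t := by funext t; rw [hp]
    rw [pd2, hfun, h2.deriv]
  -- derivative of u₁ in x
  have hdu₁ : pd1 u₁ x y =
      (a-1) * (C x y) ^ (a-1-1) * ((1-s)/(1+k^2)) * k / (1+k^2) := by
    have hopen : ∀ᶠ t in nhds x, 0 < t - x₀ - k*(y - y₀) := by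
      have hct : Continuous fun t : ℝ => t - x₀ - k*(y - y₀) :=
        (continuous_id.sub continuous_const).sub continuous_const
      exact (isOpen_lt continuous_const hct).mem_nhds hxy
    have hev : (fun t => u₁ t y) =ᶠ[nhds x]
        (fun t => k * (C t y) ^ (a-1) / (1+k^2)) := by
      filter_upwards [hopen] with t ht
      rw [hu₁, pd2ψ t y ht]; ring
    have h2 := (((hC1 x y).rpow_const (p := a-1) (Or.inl hc.ne')).const_mul k).div_const
      (1+k^2)
    rw [pd1, hev.deriv_eq, h2.deriv]; ring
  -- derivative of u₂ in y
  have hdu₂ : pd2 u₂ x y =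
      (a-1) * (C x y) ^ (a-1-1) * (-(k*(1-s))/(1+k^2)) / (1+k^2) := by
    have hopen : ∀ᶠ t in nhds y, 0 < x - x₀ - k*(t - y₀) := by
      have hct : Continuous fun t : ℝ => x - x₀ - k*(t - y₀) :=
        continuous_const.sub (continuous_const.mul (continuous_id.sub continuous_const))
      exact (isOpen_lt continuous_const hct).mem_nhds hxy
    have hev : (fun t => u₂ x t) =ᶠ[nhds y]
        (fun t => (C x t) ^ (a-1) / (1+k^2)) := by
      filter_upwards [hopen] with t ht
      rw [hu₂, pd1ψ x t ht]
    have h2 := ((hC2 x y).rpow_const (p := a-1) (Or.inl hc.ne')).div_const (1+k^2)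
    rw [pd2, hev.deriv_eq, h2.deriv]; ring
  refine ⟨?_, ?_, ?_, ?_⟩
  · rw [hu₁ x y, hu₂ x y, pd1ψ x y hxy, pd2ψ x y hxy, hdθ1, hdθ2]; ring
  · rw [hdu₁, hdu₂]; ring
  · rw [hu₁ x y, pd2ψ x y hxy, hdp1]; ring
  · have h4 : ((C x y) ^ a) ^ s = (C x y) ^ (a-1) := by
      rw [← Real.rpow_mul hc.le]
      congr 1
      rw [ha]; field_simp; ring
    rw [hu₂ x y, pd1ψ x y hxy, hθ x y, hψval, h4, hdp2]
    field_simp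
    ring
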